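/- Let σ > 1, z₀ > 1 and w₀ < 1 − z₀ (so in particular w₀ < 0), and set T := log(|w₀| / (|w₀| + 1 − z₀)). Then T > 0, and any solution z of the damped oscillator ODE with data (z₀, w₀) satisfies z(t) = z₀ + w₀(1 − e^{−t}) for all t ∈ [0, T]; moreover z(t) > 1 for t ∈ [0, T), z(T) = 1, and z'(T) = w₀ e^{−T} < 0. -/

import Mathlib

/-- The force `Φ_σ'` (derivative of the normalized adhesion potential with `u_* = 1`). -/
noncomputable def PhiD (σ u : ℝ) : ℝ :=
  if |u| ≤ 1 - 1/σ then 2*u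
  else if 1 - 1/σ ≤ u ∧ u ≤ 1 then 2*(σ - 1)*(1 - u)
  else if -1 ≤ u ∧ u ≤ -1 + 1/σ then -(2*(σ - 1)*(1 + u))
  else 0

lemma PhiD_eq_zero_of_one_le (σ u : ℝ) (hσ : 1 < σ) (hu : 1 ≤ u) : PhiD σ u = 0 := by
  have hσ0 : 0 < σ := by linarith
  have h1σ : 0 < 1/σ := by positivity
  have h1σ1 : 1/σ < 1 := by rw [div_lt_one hσ0]; linarith
  unfold PhiD
  have h1 : ¬ |u| ≤ 1 - 1/σ := by
    rw [abs_of_nonneg (by linarith)]; push_neg; linarith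
  rw [if_neg h1]
  rcases le_or_gt u 1 with h2 | h2
  · have hu1 : u = 1 := le_antisymm h2 hu
    rw [if_pos ⟨by rw [hu1]; linarith, h2⟩, hu1]; ring
  · rw [if_neg (by push_neg; intro _; linarith), if_neg (by push_neg; intro _; linarith)]

lemma const_of_deriv_zero {f : ℝ → ℝ} {a b : ℝ} (hab : a ≤ b)
    (hc : ContinuousOn f (Set.Icc a b))
    (hd : ∀ x ∈ Set.Ioo a b, HasDerivAt f 0 x) :
    ∀ x ∈ Set.Icc a b, f x = f a := by
  have hconv : Convex ℝ (Set.Icc a b) := convex_Icc a b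
  have hint : interior (Set.Icc a b) = Set.Ioo a b := interior_Icc
  have hdiff : DifferentiableOn ℝ f (interior (Set.Icc a b)) := by
    rw [hint]; intro x hx; exact (hd x hx).differentiableAt.differentiableWithinAt
  have hmono : MonotoneOn f (Set.Icc a b) :=
    monotoneOn_of_deriv_nonneg hconv hc hdiff
      (by rw [hint]; intro x hx; rw [(hd x hx).deriv])
  have hanti : AntitoneOn f (Set.Icc a b) :=
    antitoneOn_of_deriv_nonpos hconv hc hdiff
      (by rw [hint]; intro x hx; rw [(hd x hx).deriv])
  intro x hx
  have ha : a ∈ Set.Icc a b := ⟨le_refl a, hab⟩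
  exact le_antisymm (hanti ha hx hx.1) (hmono ha hx hx.1)

/-- Case IV: if `z₀ > 1` and `w₀ < 1 - z₀`, and
`T = log (|w₀| / (|w₀| + 1 - z₀))`, then `T > 0`, any solution `z` of the damped
oscillator ODE satisfies `z t = z₀ + w₀ (1 - e^{-t})` on `[0, T]`, with `z t > 1` on
`[0, T)`, `z T = 1`, and exiting speed `z' T = w₀ e^{-T} < 0`. -/
theorem case_IV (σ z₀ w₀ : ℝ) (hσ : 1 < σ) (hz₀ : 1 < z₀) (hw₀ : w₀ < 1 - z₀)
    (z z' z'' : ℝ → ℝ)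
    (hz : ∀ t ≥ (0:ℝ), HasDerivAt z (z' t) t)
    (hz' : ∀ t ≥ (0:ℝ), HasDerivAt z' (z'' t) t)
    (hode : ∀ t > (0:ℝ), z'' t + z' t + PhiD σ (z t) = 0)
    (h0 : z 0 = z₀) (h0' : z' 0 = w₀) :
    0 < Real.log (|w₀| / (|w₀| + 1 - z₀)) ∧
    (∀ t ∈ Set.Icc (0:ℝ) (Real.log (|w₀| / (|w₀| + 1 - z₀))),
        z t = z₀ + w₀ * (1 - Real.exp (-t))) ∧
    (∀ t ∈ Set.Ico (0:ℝ) (Real.log (|w₀| / (|w₀| + 1 - z₀))), 1 < z t) ∧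
    z (Real.log (|w₀| / (|w₀| + 1 - z₀))) = 1 ∧
    z' (Real.log (|w₀| / (|w₀| + 1 - z₀)))
      = w₀ * Real.exp (-(Real.log (|w₀| / (|w₀| + 1 - z₀)))) ∧
    w₀ * Real.exp (-(Real.log (|w₀| / (|w₀| + 1 - z₀)))) < 0 := by
  set T := Real.log (|w₀| / (|w₀| + 1 - z₀)) with hTdef
  have hw0 : w₀ < 0 := by linarith
  have habs : |w₀| = -w₀ := abs_of_neg hw0
  have hB : 0 < |w₀| + 1 - z₀ := by rw [habs]; linarith
  have hA : |w₀| + 1 - z₀ < |w₀| := by linarith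
  have hratio : 1 < |w₀| / (|w₀| + 1 - z₀) := (one_lt_div hB).mpr hA
  have hTpos : 0 < T := Real.log_pos hratio
  have hexpT : Real.exp T = |w₀| / (|w₀| + 1 - z₀) := Real.exp_log (by linarith)
  have hexpnegT : Real.exp (-T) = (|w₀| + 1 - z₀) / |w₀| := by
    rw [Real.exp_neg, hexpT, inv_div]
  have hw0ne : -w₀ ≠ 0 := by linarith
  have hyT : z₀ + w₀ * (1 - Real.exp (-T)) = 1 := by
    rw [hexpnegT, habs]; field_simp [hw0.ne]; ring
  -- key lemma: if z ≥ 1 on [0,b], then z is the linear solution there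
  have lin : ∀ b, 0 ≤ b → (∀ s ∈ Set.Icc (0:ℝ) b, 1 ≤ z s) →
      ∀ t ∈ Set.Icc (0:ℝ) b,
        z' t = w₀ * Real.exp (-t) ∧ z t = z₀ + w₀ * (1 - Real.exp (-t)) := by
    intro b hb hge
    have hFc : ContinuousOn (fun t => Real.exp t * z' t) (Set.Icc 0 b) := fun t ht =>
      (Real.continuous_exp.continuousAt.mul (hz' t ht.1).continuousAt).continuousWithinAt
    have hFd : ∀ x ∈ Set.Ioo (0:ℝ) b, HasDerivAt (fun t => Real.exp t * z' t) 0 x := by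
      intro x hx
      have h1 : HasDerivAt (fun t => Real.exp t * z' t)
          (Real.exp x * z' x + Real.exp x * z'' x) x :=
        (Real.hasDerivAt_exp x).mul (hz' x hx.1.le)
      have hphi : PhiD σ (z x) = 0 :=
        PhiD_eq_zero_of_one_le σ (z x) hσ (hge x ⟨hx.1.le, hx.2.le⟩)
      have hode' := hode x hx.1
      rw [hphi] at hode'
      have h2 : Real.exp x * z' x + Real.exp x * z'' x = 0 := by
        rw [← mul_add]
        have : z' x + z'' x = 0 := by linarith
        rw [this, mul_zero]
      rwa [h2] at h1
    have hF := const_of_deriv_zero hb hFc hFd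
    have hF0 : Real.exp 0 * z' 0 = w₀ := by rw [Real.exp_zero, one_mul, h0']
    have hz'eq : ∀ t ∈ Set.Icc (0:ℝ) b, z' t = w₀ * Real.exp (-t) := by
      intro t ht
      have := hF t ht
      simp only [hF0] at this
      rw [Real.exp_neg]
      field_simp
      linarith [this]
    -- now integrate once more
    have hY : ∀ t : ℝ, HasDerivAt (fun s => z₀ + w₀ * (1 - Real.exp (-s)))
        (w₀ * Real.exp (-t)) t := by
      intro t
      have h1 : HasDerivAt (fun s : ℝ => Real.exp (-s)) (-Real.exp (-t)) t := by
        simpa [Function.comp_def] using (Real.hasDerivAt_exp (-t)).comp t ((hasDerivAt_id t).neg)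
      have h2 := ((hasDerivAt_const t (1:ℝ)).sub h1).const_mul w₀
      have h3 := (hasDerivAt_const t z₀).add h2
      simpa [Pi.add_def] using h3
    have hGc : ContinuousOn (fun t => z t - (z₀ + w₀ * (1 - Real.exp (-t))))
        (Set.Icc 0 b) := fun t ht =>
      (((hz t ht.1).continuousAt).sub (hY t).continuousAt).continuousWithinAt
    have hGd : ∀ x ∈ Set.Ioo (0:ℝ) b,
        HasDerivAt (fun t => z t - (z₀ + w₀ * (1 - Real.exp (-t)))) 0 x := by
      intro x hx
      have h1 := (hz x hx.1.le).sub (hY x)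
      rwa [hz'eq x ⟨hx.1.le, hx.2.le⟩, sub_self] at h1
    have hG := const_of_deriv_zero hb hGc hGd
    have hG0 : z 0 - (z₀ + w₀ * (1 - Real.exp (-0))) = 0 := by
      simp [h0]
    intro t ht
    refine ⟨hz'eq t ht, ?_⟩
    have := hG t ht
    rw [hG0] at this
    linarith [this]
  -- the set where z stays ≥ 1
  set S := {t : ℝ | t ∈ Set.Icc (0:ℝ) T ∧ ∀ s ∈ Set.Icc (0:ℝ) t, 1 ≤ z s} with hSdef
  have hS0 : (0:ℝ) ∈ S := by
    refine ⟨⟨le_refl _, hTpos.le⟩, fun s hs => ?_⟩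
    have : s = 0 := le_antisymm hs.2 hs.1
    rw [this, h0]; linarith
  have hSne : S.Nonempty := ⟨0, hS0⟩
  have hSbdd : BddAbove S := ⟨T, fun t ht => ht.1.2⟩
  set c := sSup S with hcdef
  have hc0 : 0 ≤ c := le_csSup hSbdd hS0
  have hcT : c ≤ T := csSup_le hSne fun t ht => ht.1.2
  have hIco : ∀ s ∈ Set.Ico (0:ℝ) c, 1 ≤ z s := by
    intro s hs
    obtain ⟨t, htS, hst⟩ := exists_lt_of_lt_csSup hSne hs.2
    exact htS.2 s ⟨hs.1, hst.le⟩
  have hzc : 1 ≤ z c := by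
    rcases eq_or_lt_of_le hc0 with h | h
    · rw [← h, h0]; linarith
    · by_contra hlt
      push_neg at hlt
      have hct : ContinuousAt z c := (hz c hc0).continuousAt
      have h1 : ∀ᶠ x in nhds c, z x < 1 := hct.eventually_lt_const hlt
      have h2 : ∀ᶠ x in nhdsWithin c (Set.Iio c), z x < 1 := h1.filter_mono nhdsWithin_le_nhds
      have h3 : ∀ᶠ x in nhdsWithin c (Set.Iio c), 0 < x :=
        (eventually_gt_nhds h).filter_mono nhdsWithin_le_nhds
      have h4 : ∀ᶠ x in nhdsWithin c (Set.Iio c), x < c := self_mem_nhdsWithin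
      obtain ⟨x, hx1, hx2, hx3⟩ := (h2.and (h3.and h4)).exists
      have := hIco x ⟨hx2.le, hx3⟩
      linarith
  have hcS : ∀ s ∈ Set.Icc (0:ℝ) c, 1 ≤ z s := by
    intro s hs
    rcases eq_or_lt_of_le hs.2 with h | h
    · rw [h]; exact hzc
    · exact hIco s ⟨hs.1, h⟩
  have hlin_c := lin c hc0 hcS
  have hceq : c = T := by
    by_contra hne
    have hclt : c < T := lt_of_le_of_ne hcT hne
    have hzc' : z c = z₀ + w₀ * (1 - Real.exp (-c)) := (hlin_c c ⟨hc0, le_refl c⟩).2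
    have hE : Real.exp (-T) < Real.exp (-c) := Real.exp_lt_exp.mpr (by linarith)
    have h1 : 1 < z c := by
      rw [hzc']
      nlinarith [mul_pos (neg_pos.mpr hw0) (sub_pos.mpr hE)]
    have hct : ContinuousAt z c := (hz c hc0).continuousAt
    have hev : ∀ᶠ x in nhds c, 1 < z x := hct.eventually_const_lt h1
    obtain ⟨ε, hε, hball⟩ := Metric.eventually_nhds_iff.mp hev
    set t := min T (c + ε/2) with htdef
    have htc : c < t := lt_min hclt (by linarith)
    have htS : t ∈ S := by
      refine ⟨⟨by linarith, min_le_left _ _⟩, fun s hs => ?_⟩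
      rcases le_or_gt s c with h | h
      · exact hcS s ⟨hs.1, h⟩
      · refine le_of_lt (hball ?_)
        rw [Real.dist_eq, abs_of_pos (by linarith : (0:ℝ) < s - c)]
        have : t ≤ c + ε/2 := min_le_right _ _
        have hst : s ≤ t := hs.2
        linarith
    exact absurd (le_csSup hSbdd htS) (not_le.mpr htc)
  rw [hceq] at hlin_c
  refine ⟨hTpos, fun t ht => (hlin_c t ht).2, ?_, ?_, ?_, ?_⟩
  · intro t ht
    rw [(hlin_c t ⟨ht.1, ht.2.le⟩).2]
    have hE : Real.exp (-T) < Real.exp (-t) := Real.exp_lt_exp.mpr (by linarith [ht.2])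
    nlinarith [mul_pos (neg_pos.mpr hw0) (sub_pos.mpr hE)]
  · rw [(hlin_c T ⟨hTpos.le, le_refl T⟩).2]; exact hyT
  · exact (hlin_c T ⟨hTpos.le, le_refl T⟩).1
  · exact mul_neg_of_neg_of_pos hw0 (Real.exp_pos _)
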